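/- Let C be a systematic linear code with generator matrix [I_n | E] over a field, and suppose the bipartite graph G_C of E has no 4-cycle. If every left vertex of G_C has degree at least k and every entry of E in the support is nonzero, then every message symbol x_i can be recovered from each of k pairwise disjoint sets of code symbols (disjoint repair groups), where the repair group for parity c_j containing x_i consists of c_j together with the message symbols other than x_i participating in c_j. -/

import Mathlib

def No4Cycle {V1 V2 : Type*} (E : V1 → V2 → Prop) : Prop :=
  ∀ x1 x2 c1 c2, x1 ≠ x2 → c1 ≠ c2 → E x1 c1 → E x1 c2 → E x2 c1 → E x2 c2 → False

def repairGroup {V1 V2 : Type*} (E : V1 → V2 → Prop) (x : V1) (c : V2) : Set (V1 ⊕ V2) :=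
  {Sum.inr c} ∪ Sum.inl '' {y : V1 | E y c ∧ y ≠ x}

/-- For a systematic linear code with generator `[Iₙ | Emat]` whose bipartite graph
(edges = support of `Emat`) has no 4-cycle and minimum left degree at least `k`,
every message symbol `x i` has `k` pairwise disjoint repair groups, and can be
recovered (as a function of the symbols of the codeword `(x, x·Emat)` lying in the
repair group) from each of them. -/
theorem stmt_15 {F : Type*} [Field F] (n p k : ℕ)
    (Emat : Matrix (Fin n) (Fin p) F)
    (h4 : No4Cycle (fun (i : Fin n) (j : Fin p) => Emat i j ≠ 0))
    (hdeg : ∀ i : Fin n, ∃ s : Finset (Fin p), k ≤ s.card ∧ ∀ j ∈ s, Emat i j ≠ 0) :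
    ∀ i : Fin n, ∃ c : Fin k → Fin p,
      Function.Injective c ∧
      (∀ a : Fin k, Emat i (c a) ≠ 0) ∧
      (∀ a b : Fin k, a ≠ b →
        Disjoint (repairGroup (fun u j => Emat u j ≠ 0) i (c a))
                 (repairGroup (fun u j => Emat u j ≠ 0) i (c b))) ∧
      (∀ a : Fin k, ∃ dec : (repairGroup (fun u j => Emat u j ≠ 0) i (c a) → F) → F,
        ∀ x : Fin n → F,
          dec (fun b => Sum.elim x (fun jj : Fin p => ∑ u : Fin n, Emat u jj * x u) b.1)
            = x i) := by
  classical
  intro i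
  obtain ⟨s, hcard, hs⟩ := hdeg i
  refine ⟨fun a => s.orderEmbOfCardLe hcard a, fun a b hab => ?_, fun a => ?_, ?_, ?_⟩
  · exact (s.orderEmbOfCardLe hcard).injective hab
  · exact hs _ (s.orderEmbOfCardLe_mem hcard a)
  · intro a b hab
    have hc : s.orderEmbOfCardLe hcard a ≠ s.orderEmbOfCardLe hcard b := by
      intro h
      exact hab ((s.orderEmbOfCardLe hcard).injective h)
    rw [Set.disjoint_left]
    rintro z (hz | ⟨y, ⟨hy1, hy2⟩, rfl⟩)
    · rcases hz with rfl
      rintro (hz2 | ⟨y, _, hy⟩)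
      · exact hc (Sum.inr.inj hz2)
      · exact Sum.inl_ne_inr hy
    · rintro (hz2 | ⟨y', ⟨hy1', hy2'⟩, hy'⟩)
      · exact Sum.inl_ne_inr (Set.mem_singleton_iff.mp hz2)
      · have : y' = y := Sum.inl.inj hy'
        subst this
        exact h4 i y' _ _ (Ne.symm hy2) hc
          (hs _ (s.orderEmbOfCardLe_mem hcard a))
          (hs _ (s.orderEmbOfCardLe_mem hcard b)) hy1 hy1'
  · intro a
    set j := s.orderEmbOfCardLe hcard a with hj
    have hij : Emat i j ≠ 0 := hs _ (s.orderEmbOfCardLe_mem hcard a)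
    have hmem : (Sum.inr j : Fin n ⊕ Fin p) ∈
        repairGroup (fun u jj => Emat u jj ≠ 0) i j := Or.inl rfl
    refine ⟨fun f => (f ⟨Sum.inr j, hmem⟩ -
      ∑ u : Fin n, if h : Emat u j ≠ 0 ∧ u ≠ i then
        Emat u j * f ⟨Sum.inl u, Or.inr ⟨u, h, rfl⟩⟩ else 0) / Emat i j, ?_⟩
    intro x
    simp only [Sum.elim_inr, Sum.elim_inl]
    rw [div_eq_iff hij]
    have : (∑ u : Fin n, if h : Emat u j ≠ 0 ∧ u ≠ i then Emat u j * x u else 0)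
        = ∑ u : Fin n, if u ≠ i then Emat u j * x u else 0 := by
      apply Finset.sum_congr rfl
      intro u _
      by_cases h1 : Emat u j = 0
      · simp [h1]
      · simp [h1]
    rw [this]
    have h3 : (∑ u : Fin n, if u ≠ i then Emat u j * x u else 0)
        = ∑ u ∈ Finset.univ.erase i, Emat u j * x u := by
      rw [← Finset.sum_filter, Finset.filter_ne' Finset.univ i]
    have h2 : (∑ u : Fin n, Emat u j * x u)
        = Emat i j * x i + ∑ u ∈ Finset.univ.erase i, Emat u j * x u :=
      (Finset.add_sum_erase _ _ (Finset.mem_univ i)).symm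
    rw [h3, h2]
    ring
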